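/- (Mellin-transform representation of the Euler q-zeta function, Eq. (39).) Suppose in addition 0 < q < 1. Let h ≥ 1 be an integer, x > 0 a real number, and s a complex number with Re(s) > 0. Then the integral ∫_{0}^{∞} t^{s−1} · (1+q) · (Σ_{n=0}^{∞} (−1)^n q^{hn} exp(−[n+x]_q · t)) dt converges and equals Γ(s) · ζ_{E,q}^{h}(s,x), where ζ_{E,q}^{h}(s,x) := (1+q) · Σ_{n=0}^{∞} (−1)^n q^{nh} · [n+x]_q^{−s} is an absolutely convergent series, [n+x]_q^{−s} := exp(−s · log [n+x]_q) (note [n+x]_q > 0 since x > 0), and Γ is the complex Gamma function. -/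

import Mathlib

open Finset

/-- The q-number `[x]_q = (1 - q^x)/(1 - q)`, with `q^x = exp (x * log q)` (rpow). -/
noncomputable def qNum (q x : ℝ) : ℝ := (1 - q ^ x) / (1 - q)

/-- `[l]_{-q} = (1 - (-q)^l)/(1 + q)` for a natural number `l`. -/
noncomputable def qNumNeg (q : ℝ) (l : ℕ) : ℝ := (1 - (-q) ^ l) / (1 + q)

/-- The higher-order q-Euler polynomial
`E_{m,q}^{(h,k)}(x) = ((1+q)^k/(1-q)^m) * Σ_{j=0}^m C(m,j) (-1)^j q^{jx} / Π_{i=0}^{k-1} (1 + q^{h+j-i})`. -/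
noncomputable def qE (q : ℝ) (h : ℤ) (k m : ℕ) (x : ℝ) : ℝ :=
  ((1 + q) ^ k / (1 - q) ^ m) *
    ∑ j ∈ Finset.range (m + 1),
      (m.choose j : ℝ) * (-1) ^ j * q ^ ((j : ℝ) * x) /
        ∏ i ∈ Finset.range k, (1 + q ^ ((h : ℝ) + (j : ℝ) - (i : ℝ)))

set_option maxHeartbeats 1000000 in
theorem stmt_19 (q : ℝ) (hq0 : 0 < q) (hq1 : q < 1) (h : ℤ) (hh : 1 ≤ h)
    (x : ℝ) (hx : 0 < x) (s : ℂ) (hs : 0 < s.re) :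
    Summable (fun n : ℕ =>
        ‖(-1 : ℂ) ^ n * (q : ℂ) ^ ((n : ℤ) * h) *
          Complex.exp (-s * (Real.log (qNum q ((n : ℝ) + x)) : ℂ))‖) ∧
      MeasureTheory.IntegrableOn
        (fun t : ℝ =>
          (t : ℂ) ^ (s - 1) * ((1 + q : ℝ) : ℂ) *
            ((∑' n : ℕ, (-1 : ℝ) ^ n * q ^ ((n : ℤ) * h) *
                Real.exp (-(qNum q ((n : ℝ) + x)) * t) : ℝ) : ℂ))
        (Set.Ioi 0) ∧
      (∫ t in Set.Ioi (0 : ℝ),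
          (t : ℂ) ^ (s - 1) * ((1 + q : ℝ) : ℂ) *
            ((∑' n : ℕ, (-1 : ℝ) ^ n * q ^ ((n : ℤ) * h) *
                Real.exp (-(qNum q ((n : ℝ) + x)) * t) : ℝ) : ℂ))
        = Complex.Gamma s *
            (((1 + q : ℝ) : ℂ) *
              ∑' n : ℕ, (-1 : ℂ) ^ n * (q : ℂ) ^ ((n : ℤ) * h) *
                Complex.exp (-s * (Real.log (qNum q ((n : ℝ) + x)) : ℂ))) := by
  have hq1' : (0:ℝ) < 1 - q := by linarith
  -- positivity of q-numbers
  have hp0 : ∀ n : ℕ, 0 < qNum q ((n : ℝ) + x) := by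
    intro n
    have hxn : (0:ℝ) < (n:ℝ) + x := by positivity
    have : q ^ ((n:ℝ) + x) < 1 := Real.rpow_lt_one hq0.le hq1 hxn
    exact div_pos (by linarith) hq1'
  have hc0 : 0 < qNum q x := by
    have : q ^ x < 1 := Real.rpow_lt_one hq0.le hq1 hx
    exact div_pos (by linarith) hq1'
  have hcp : ∀ n : ℕ, qNum q x ≤ qNum q ((n : ℝ) + x) := by
    intro n
    have hle : q ^ ((n:ℝ) + x) ≤ q ^ x :=
      Real.rpow_le_rpow_of_exponent_ge hq0 hq1.le (le_add_of_nonneg_left n.cast_nonneg)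
    unfold qNum
    gcongr
  -- zpow estimates
  have hzpos : ∀ m : ℤ, (0:ℝ) < q ^ m := fun m => zpow_pos hq0 m
  have hqnh : ∀ n : ℕ, q ^ ((n:ℤ) * h) ≤ q ^ n := by
    intro n
    calc q ^ ((n:ℤ) * h) ≤ q ^ ((n:ℕ) : ℤ) :=
          zpow_le_zpow_right_of_le_one₀ hq0 hq1.le
            (le_mul_of_one_le_right (Int.ofNat_nonneg n) hh)
      _ = q ^ n := zpow_natCast q n
  have hgeo : Summable (fun n : ℕ => q ^ n) := summable_geometric_of_lt_one hq0.le hq1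
  -- the complex coefficients
  set a : ℕ → ℂ := fun n => (-1 : ℂ) ^ n * (q : ℂ) ^ ((n : ℤ) * h) with ha
  have hnorm_a : ∀ n : ℕ, ‖a n‖ = q ^ ((n:ℤ) * h) := by
    intro n
    rw [ha]
    rw [norm_mul, norm_pow, norm_neg, norm_one, one_pow, one_mul, norm_zpow,
      Complex.norm_real, Real.norm_eq_abs, abs_of_pos hq0]
  -- norm of the summands of the zeta series
  have hnorm : ∀ n : ℕ,
      ‖a n * Complex.exp (-s * (Real.log (qNum q ((n : ℝ) + x)) : ℂ))‖
        = q ^ ((n:ℤ) * h) * Real.exp (-s.re * Real.log (qNum q ((n : ℝ) + x))) := by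
    intro n
    rw [norm_mul, hnorm_a, Complex.norm_exp]
    congr 2
    simp [Complex.mul_re]
  -- key summability
  have hlogle : ∀ n : ℕ,
      Real.exp (-s.re * Real.log (qNum q ((n : ℝ) + x)))
        ≤ Real.exp (-s.re * Real.log (qNum q x)) := by
    intro n
    apply Real.exp_le_exp.mpr
    have := Real.log_le_log hc0 (hcp n)
    nlinarith [hs]
  have hSumKey : Summable (fun n : ℕ =>
      q ^ ((n:ℤ) * h) * Real.exp (-s.re * Real.log (qNum q ((n : ℝ) + x)))) := by
    apply Summable.of_nonneg_of_le (fun n => by positivity)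
      (fun n => mul_le_mul (hqnh n) (hlogle n) (Real.exp_pos _).le (pow_nonneg hq0.le _))
    exact hgeo.mul_right _
  have hsum1 : Summable (fun n : ℕ =>
      ‖a n * Complex.exp (-s * (Real.log (qNum q ((n : ℝ) + x)) : ℂ))‖) :=
    hSumKey.congr fun n => (hnorm n).symm
-- the real series of functions
  have hreal_term_bound : ∀ (n : ℕ) (t : ℝ), 0 ≤ t →
      |(-1:ℝ) ^ n * q ^ ((n:ℤ) * h) * Real.exp (-(qNum q ((n : ℝ) + x)) * t)| ≤ q ^ n := by
    intro n t ht
    rw [abs_mul, abs_mul, abs_pow, abs_neg, abs_one, one_pow, one_mul,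
      abs_of_pos (hzpos _), Real.abs_exp]
    calc q ^ ((n:ℤ) * h) * Real.exp (-(qNum q ((n : ℝ) + x)) * t)
        ≤ q ^ n * 1 := by
          apply mul_le_mul (hqnh n) _ (Real.exp_pos _).le (pow_nonneg hq0.le _)
          rw [Real.exp_le_one_iff]
          have := (hp0 n).le
          nlinarith
      _ = q ^ n := mul_one _
  have hreal_summable : ∀ t : ℝ, 0 ≤ t → Summable (fun n : ℕ =>
      (-1:ℝ) ^ n * q ^ ((n:ℤ) * h) * Real.exp (-(qNum q ((n : ℝ) + x)) * t)) := by
    intro t ht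
    apply Summable.of_abs
    exact Summable.of_nonneg_of_le (fun n => abs_nonneg _)
      (fun n => hreal_term_bound n t ht) hgeo
  -- the sum function
  set F : ℝ → ℂ := fun t =>
    ((∑' n : ℕ, (-1 : ℝ) ^ n * q ^ ((n : ℤ) * h) *
        Real.exp (-(qNum q ((n : ℝ) + x)) * t) : ℝ) : ℂ) with hF
  have hFhasSum : ∀ t ∈ Set.Ioi (0:ℝ),
      HasSum (fun n : ℕ => a n * (Real.exp (-(qNum q ((n : ℝ) + x)) * t) : ℂ)) (F t) := by
    intro t ht
    have h1 := ((hreal_summable t (le_of_lt ht)).hasSum).mapL Complex.ofRealCLM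
    refine h1.congr_fun fun n => ?_
    simp only [Function.comp, Complex.ofRealCLM_apply, ha]
    push_cast
    ring
  -- summability hypothesis for hasSum_mellin
  have h_sum : Summable (fun n : ℕ => ‖a n‖ / (qNum q ((n : ℝ) + x)) ^ s.re) := by
    refine hSumKey.congr fun n => ?_
    rw [hnorm_a, Real.rpow_def_of_pos (hp0 n), div_eq_mul_inv, ← Real.exp_neg]
    congr 2
    ring
  have key := hasSum_mellin (a := a) (p := fun n => qNum q ((n : ℝ) + x)) (F := F)
    (fun n => Or.inr (hp0 n)) hs hFhasSum h_sum
  -- rewrite the terms of `key`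
  have hterm : ∀ n : ℕ, Complex.Gamma s * a n / ((qNum q ((n : ℝ) + x) : ℝ) : ℂ) ^ s
      = Complex.Gamma s *
          (a n * Complex.exp (-s * (Real.log (qNum q ((n : ℝ) + x)) : ℂ))) := by
    intro n
    have hne : ((qNum q ((n : ℝ) + x) : ℝ) : ℂ) ≠ 0 := by
      exact_mod_cast (hp0 n).ne'
    rw [Complex.cpow_def_of_ne_zero hne, ← Complex.ofReal_log (hp0 n).le,
      div_eq_mul_inv, ← Complex.exp_neg]
    ring_nf
  rw [funext hterm] at key
  -- integrability of the integrand
  have hmeas : MeasureTheory.AEStronglyMeasurable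
      (fun t : ℝ => (t : ℂ) ^ (s - 1) * ((1 + q : ℝ) : ℂ) * F t)
      (MeasureTheory.volume.restrict (Set.Ioi 0)) := by
    have h1 : ContinuousOn (fun t : ℝ => (t : ℂ) ^ (s - 1)) (Set.Ioi 0) := by
      intro t ht
      have hpair : ContinuousAt (fun u : ℝ => ((u, s - 1) : ℝ × ℂ)) t :=
        (continuous_id.prodMk continuous_const).continuousAt
      exact ((Complex.continuousAt_ofReal_cpow t (s - 1) (Or.inr (ne_of_gt ht))).comp
        (x := t) hpair).continuousWithinAt
    have h2 : ContinuousOn F (Set.Ioi 0) := by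
      rw [hF]
      apply Complex.continuous_ofReal.comp_continuousOn
      apply ContinuousOn.mono (s := Set.Ici (0:ℝ)) _ Set.Ioi_subset_Ici_self
      apply continuousOn_tsum (u := fun n : ℕ => q ^ n)
        (fun n => Continuous.continuousOn (by continuity)) hgeo
      intro n t ht
      rw [Real.norm_eq_abs]
      exact hreal_term_bound n t ht
    exact (((h1.mul continuousOn_const).mul h2).aestronglyMeasurable measurableSet_Ioi)
  have hbound_int : MeasureTheory.IntegrableOn
      (fun t : ℝ => ((1 + q) * (1 - q)⁻¹) * (t ^ (s.re - 1) * Real.exp (-(qNum q x) * t)))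
      (Set.Ioi 0) := by
    apply MeasureTheory.Integrable.const_mul
    have := integrableOn_rpow_mul_exp_neg_mul_rpow
      (show (-1:ℝ) < s.re - 1 by linarith) (zero_lt_one' ℝ) hc0
    refine this.congr_fun (fun t ht => ?_) measurableSet_Ioi
    simp only [Real.rpow_one]
  have hFbound : ∀ t ∈ Set.Ioi (0:ℝ),
      ‖(t : ℂ) ^ (s - 1) * ((1 + q : ℝ) : ℂ) * F t‖
        ≤ ((1 + q) * (1 - q)⁻¹) * (t ^ (s.re - 1) * Real.exp (-(qNum q x) * t)) := by
    intro t ht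
    have ht' : (0:ℝ) < t := ht
    rw [norm_mul, norm_mul, Complex.norm_cpow_eq_rpow_re_of_pos ht',
      Complex.sub_re, Complex.one_re, Complex.norm_real, Real.norm_eq_abs,
      abs_of_pos (by linarith : (0:ℝ) < 1 + q), hF, Complex.norm_real, Real.norm_eq_abs]
    have hsum2 : Summable (fun n : ℕ => q ^ n * Real.exp (-(qNum q x) * t)) :=
      hgeo.mul_right _
    have habs_sum : Summable (fun n : ℕ =>
        |(-1:ℝ) ^ n * q ^ ((n:ℤ) * h) * Real.exp (-(qNum q ((n : ℝ) + x)) * t)|) :=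
      Summable.of_nonneg_of_le (fun n => abs_nonneg _)
        (fun n => hreal_term_bound n t ht'.le) hgeo
    have h1 : |∑' n : ℕ, (-1:ℝ) ^ n * q ^ ((n:ℤ) * h) *
          Real.exp (-(qNum q ((n : ℝ) + x)) * t)|
        ≤ ∑' n : ℕ, q ^ n * Real.exp (-(qNum q x) * t) := by
      have habs_sum' : Summable (fun n : ℕ =>
          ‖(-1:ℝ) ^ n * q ^ ((n:ℤ) * h) * Real.exp (-(qNum q ((n : ℝ) + x)) * t)‖) := by
        simpa only [Real.norm_eq_abs] using habs_sum
      rw [← Real.norm_eq_abs]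
      refine le_trans (norm_tsum_le_tsum_norm habs_sum') ?_
      apply Summable.tsum_le_tsum _ habs_sum' hsum2
      intro n
      rw [Real.norm_eq_abs, abs_mul, abs_mul, abs_pow, abs_neg, abs_one, one_pow, one_mul,
        abs_of_pos (hzpos _), Real.abs_exp]
      apply mul_le_mul (hqnh n) _ (Real.exp_pos _).le (pow_nonneg hq0.le _)
      apply Real.exp_le_exp.mpr
      have := hcp n
      nlinarith
    have h2 : ∑' n : ℕ, q ^ n * Real.exp (-(qNum q x) * t)
        = (1 - q)⁻¹ * Real.exp (-(qNum q x) * t) := by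
      rw [tsum_mul_right, tsum_geometric_of_lt_one hq0.le hq1]
    calc t ^ (s.re - 1) * (1 + q) * |∑' n : ℕ, (-1:ℝ) ^ n * q ^ ((n:ℤ) * h) *
            Real.exp (-(qNum q ((n : ℝ) + x)) * t)|
        ≤ t ^ (s.re - 1) * (1 + q) * ((1 - q)⁻¹ * Real.exp (-(qNum q x) * t)) := by
          apply mul_le_mul_of_nonneg_left (h2 ▸ h1)
          positivity
      _ = ((1 + q) * (1 - q)⁻¹) * (t ^ (s.re - 1) * Real.exp (-(qNum q x) * t)) := by ring
  have hInt : MeasureTheory.IntegrableOn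
      (fun t : ℝ => (t : ℂ) ^ (s - 1) * ((1 + q : ℝ) : ℂ) * F t) (Set.Ioi 0) := by
    apply MeasureTheory.Integrable.mono' hbound_int hmeas
    rw [MeasureTheory.ae_restrict_iff' measurableSet_Ioi]
    exact MeasureTheory.ae_of_all _ hFbound
  -- the integral identity
  have hEq : (∫ t in Set.Ioi (0:ℝ),
        (t : ℂ) ^ (s - 1) * ((1 + q : ℝ) : ℂ) * F t)
      = Complex.Gamma s * (((1 + q : ℝ) : ℂ) *
          ∑' n : ℕ, a n * Complex.exp (-s * (Real.log (qNum q ((n : ℝ) + x)) : ℂ))) := by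
      have hflip : ∀ t : ℝ, (t : ℂ) ^ (s - 1) * ((1 + q : ℝ) : ℂ) * F t
          = ((1 + q : ℝ) : ℂ) * ((t : ℂ) ^ (s - 1) • F t) := by
        intro t; simp only [smul_eq_mul]; ring
      calc (∫ t in Set.Ioi (0:ℝ), (t : ℂ) ^ (s - 1) * ((1 + q : ℝ) : ℂ) * F t)
          = ((1 + q : ℝ) : ℂ) * ∫ t in Set.Ioi (0:ℝ), (t : ℂ) ^ (s - 1) • F t := by
            simp_rw [hflip]
            exact MeasureTheory.integral_const_mul _ _
        _ = ((1 + q : ℝ) : ℂ) * mellin F s := rfl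
        _ = ((1 + q : ℝ) : ℂ) * (Complex.Gamma s *
              ∑' n : ℕ, a n * Complex.exp (-s * (Real.log (qNum q ((n : ℝ) + x)) : ℂ))) := by
            rw [← key.tsum_eq, tsum_mul_left]
        _ = Complex.Gamma s * (((1 + q : ℝ) : ℂ) *
              ∑' n : ℕ, a n * Complex.exp (-s * (Real.log (qNum q ((n : ℝ) + x)) : ℂ))) := by
            ring
  exact ⟨hsum1, hInt, hEq⟩
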